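/- arXiv:1401.2566 — 3 statements merged into one kernel-verified Lean document; each statement's English description precedes it below -/
import Mathlib

section
/- Let A be a commutative associative unital algebra and let D, F: A → A be two commuting generalized derivations. Then the bracket [a,b] = D(a)F(b) - F(a)D(b) defines a Lie algebra structure on the underlying vector space of A (i.e., it is bilinear, antisymmetric, and satisfies the Jacobi identity). -/
/-- A generalized derivation of a commutative associative unital algebra `A`. -/
def IsGenDer {K A : Type*} [Field K] [CommRing A] [Algebra K A] (D : A →ₗ[K] A) : Prop :=
  ∀ a b : A, D (a * b) = D a * b + a * D b - a * b * D 1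

/-- The Poisson-type bracket `[a,b] = D(a)F(b) - F(a)D(b)`. -/
def pbr {K A : Type*} [Field K] [CommRing A] [Algebra K A]
    (D F : A →ₗ[K] A) (a b : A) : A :=
  D a * F b - F a * D b

/-- For commuting generalized derivations `D`, `F`, the bracket
`[a,b] = D(a)F(b) - F(a)D(b)` defines a Lie algebra structure on `A`:
it is bilinear, alternating, and satisfies the Jacobi identity. -/
theorem poisson_bracket_is_lie {K A : Type*} [Field K] [CommRing A] [Algebra K A]
    (D F : A →ₗ[K] A) (hD : IsGenDer D) (hF : IsGenDer F)
    (hcomm : D ∘ₗ F = F ∘ₗ D) :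
    (∀ a b c : A, pbr D F (a + b) c = pbr D F a c + pbr D F b c) ∧
    (∀ (t : K) (a b : A), pbr D F (t • a) b = t • pbr D F a b) ∧
    (∀ a b c : A, pbr D F a (b + c) = pbr D F a b + pbr D F a c) ∧
    (∀ (t : K) (a b : A), pbr D F a (t • b) = t • pbr D F a b) ∧
    (∀ a : A, pbr D F a a = 0) ∧
    (∀ a b c : A,
      pbr D F (pbr D F a b) c + pbr D F (pbr D F b c) a + pbr D F (pbr D F c a) b = 0) := by
  have hc : ∀ x : A, D (F x) = F (D x) := fun x => LinearMap.ext_iff.mp hcomm x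
  refine ⟨?_, ?_, ?_, ?_, ?_, ?_⟩
  · intro a b c; simp [pbr, map_add]; ring
  · intro t a b; simp [pbr, map_smul, smul_sub, smul_mul_assoc]
  · intro a b c; simp [pbr, map_add]; ring
  · intro t a b; simp [pbr, map_smul, smul_sub, mul_smul_comm]
  · intro a; simp [pbr]; ring
  · intro a b c
    simp only [pbr, map_sub]
    rw [hD, hD, hD, hD, hD, hD, hF, hF, hF, hF, hF, hF]
    simp only [hc]
    ring
end

section
/- Let P be the Lie algebra on the divided powers algebra O_2(2,1) over a field of characteristic 5 with bracket [a,b] = ∂_x(a)∂_y(b) - ∂_y(a)∂_x(b). Then the center of P is the one-dimensional span of the unit element 1. -/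
open scoped BigOperators

/-- Multiplication of the divided powers algebra `O₂(2,1)` in characteristic 5,
realized on coefficient functions with respect to the basis
`x^(i) y^(j)`, `0 ≤ i < 25`, `0 ≤ j < 5`. -/
def dpMul2 {K : Type*} [Field K] (f g : Fin 25 × Fin 5 → K) : Fin 25 × Fin 5 → K :=
  fun k => ∑ i : Fin 25 × Fin 5, ∑ j : Fin 25 × Fin 5,
    if (i.1 : ℕ) + (j.1 : ℕ) = (k.1 : ℕ) ∧ (i.2 : ℕ) + (j.2 : ℕ) = (k.2 : ℕ) then
      ((((i.1 : ℕ) + (j.1 : ℕ)).choose i.1 : K) * (((i.2 : ℕ) + (j.2 : ℕ)).choose i.2 : K))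
        * f i * g j
    else 0

/-- The unit `1 = x^(0) y^(0)` of `O₂(2,1)`. -/
def dpOne2 {K : Type*} [Field K] : Fin 25 × Fin 5 → K :=
  fun k => if (k.1 : ℕ) = 0 ∧ (k.2 : ℕ) = 0 then 1 else 0

/-- The lowering derivation `∂_x` of `O₂(2,1)`. -/
def dpDx {K : Type*} [Field K] (f : Fin 25 × Fin 5 → K) : Fin 25 × Fin 5 → K :=
  fun k => if h : (k.1 : ℕ) + 1 < 25 then f (⟨(k.1 : ℕ) + 1, h⟩, k.2) else 0

/-- The lowering derivation `∂_y` of `O₂(2,1)`. -/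
def dpDy {K : Type*} [Field K] (f : Fin 25 × Fin 5 → K) : Fin 25 × Fin 5 → K :=
  fun k => if h : (k.2 : ℕ) + 1 < 5 then f (k.1, ⟨(k.2 : ℕ) + 1, h⟩) else 0

/-- The Poisson bracket `[a,b] = ∂_x(a)∂_y(b) - ∂_y(a)∂_x(b)` on `O₂(2,1)`. -/
def pbr2 {K : Type*} [Field K] (a b : Fin 25 × Fin 5 → K) : Fin 25 × Fin 5 → K :=
  dpMul2 (dpDx a) (dpDy b) - dpMul2 (dpDy a) (dpDx b)

lemma dpMul2_zero_left {K : Type*} [Field K] (g : Fin 25 × Fin 5 → K) :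
    dpMul2 (0 : Fin 25 × Fin 5 → K) g = 0 := by
  funext k; simp [dpMul2]

lemma dpMul2_zero_right {K : Type*} [Field K] (f : Fin 25 × Fin 5 → K) :
    dpMul2 f (0 : Fin 25 × Fin 5 → K) = 0 := by
  funext k; simp [dpMul2]

lemma dpMul2_one_right {K : Type*} [Field K] (f : Fin 25 × Fin 5 → K) :
    dpMul2 f dpOne2 = f := by
  funext k
  unfold dpMul2 dpOne2
  rw [Finset.sum_comm]
  rw [Finset.sum_eq_single ((0 : Fin 25), (0 : Fin 5))]
  · rw [Finset.sum_eq_single k]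
    · simp
    · intro i _ hi
      rw [if_neg]
      rintro ⟨h1, h2⟩
      exact hi (Prod.ext (Fin.val_injective (by simpa using h1))
        (Fin.val_injective (by simpa using h2)))
    · simp
  · intro j _ hj
    have : ¬((j.1 : ℕ) = 0 ∧ (j.2 : ℕ) = 0) := by
      rintro ⟨h1, h2⟩
      exact hj (by ext <;> simp [h1, h2])
    simp only [this, ↓reduceIte, mul_zero, ite_self, Finset.sum_const_zero]
  · simp

/-- The center of the Poisson Lie algebra `P` on `O₂(2,1)` (characteristic 5) is the
one-dimensional span of the unit element `1`. -/
theorem poisson_center_eq_span_one {K : Type*} [Field K] [CharP K 5] :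
    ∀ a : Fin 25 × Fin 5 → K,
      (∀ b : Fin 25 × Fin 5 → K, pbr2 a b = 0) ↔ ∃ c : K, a = c • (dpOne2 : Fin 25 × Fin 5 → K) := by
  intro a
  constructor
  · intro h
    set bx : Fin 25 × Fin 5 → K := fun k => if (k.1 : ℕ) = 1 ∧ (k.2 : ℕ) = 0 then 1 else 0 with hbx
    have hbxdx : dpDx bx = (dpOne2 : Fin 25 × Fin 5 → K) := by
      funext k
      have h1 := k.1.isLt
      unfold dpDx dpOne2
      simp only [hbx, Fin.val_mk]
      split_ifs <;> first | rfl | omega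
    have hbxdy : dpDy bx = 0 := by
      funext k
      unfold dpDy
      simp only [hbx, Pi.zero_apply]
      split_ifs <;> simp_all
    have hy0 : dpDy a = 0 := by
      have := h bx
      unfold pbr2 at this
      rw [hbxdx, hbxdy, dpMul2_one_right, dpMul2_zero_right] at this
      funext k
      have := congrFun this k
      simpa using this
    set by' : Fin 25 × Fin 5 → K := fun k => if (k.1 : ℕ) = 0 ∧ (k.2 : ℕ) = 1 then 1 else 0 with hby
    have hbydy : dpDy by' = (dpOne2 : Fin 25 × Fin 5 → K) := by
      funext k
      have h2 := k.2.isLt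
      unfold dpDy dpOne2
      simp only [hby, Fin.val_mk]
      split_ifs <;> first | rfl | omega
    have hbydx : dpDx by' = 0 := by
      funext k
      unfold dpDx
      simp only [hby, Pi.zero_apply]
      split_ifs <;> simp_all
    have hx0 : dpDx a = 0 := by
      have := h by'
      unfold pbr2 at this
      rw [hbydx, hbydy, dpMul2_one_right, hy0, dpMul2_zero_left] at this
      funext k
      have := congrFun this k
      simpa using this
    refine ⟨a (0, 0), ?_⟩
    funext k
    obtain ⟨⟨i, hi⟩, ⟨j, hj⟩⟩ := k
    rcases Nat.eq_zero_or_pos i with hi0 | hi0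
    · rcases Nat.eq_zero_or_pos j with hj0 | hj0
      · subst hi0; subst hj0
        simp [dpOne2]
      · have hj1 : j - 1 + 1 < 5 := by omega
        have := congrFun hy0 (⟨i, hi⟩, ⟨j - 1, by omega⟩)
        unfold dpDy at this
        rw [dif_pos hj1] at this
        simp only [Pi.zero_apply] at this
        have hjj : (⟨j - 1 + 1, hj1⟩ : Fin 5) = ⟨j, hj⟩ := Fin.mk_eq_mk.mpr (by omega)
        rw [hjj] at this
        rw [this]
        have hjne : j ≠ 0 := by omega
        simp [dpOne2, hjne]
    · have hi1 : i - 1 + 1 < 25 := by omega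
      have := congrFun hx0 (⟨i - 1, by omega⟩, ⟨j, hj⟩)
      unfold dpDx at this
      rw [dif_pos hi1] at this
      simp only [Pi.zero_apply] at this
      have hii : (⟨i - 1 + 1, hi1⟩ : Fin 25) = ⟨i, hi⟩ := Fin.mk_eq_mk.mpr (by omega)
      rw [hii] at this
      rw [this]
      have hine : i ≠ 0 := by omega
      simp [dpOne2, hine]
  · rintro ⟨c, rfl⟩ b
    have hx : dpDx (c • (dpOne2 : Fin 25 × Fin 5 → K)) = 0 := by
      funext k
      unfold dpDx
      split_ifs with h1
      · simp [dpOne2]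
      · rfl
    have hy : dpDy (c • (dpOne2 : Fin 25 × Fin 5 → K)) = 0 := by
      funext k
      unfold dpDy
      split_ifs with h1
      · simp [dpOne2]
      · rfl
    unfold pbr2
    rw [hx, hy, dpMul2_zero_left, dpMul2_zero_left]
    simp
end

section
/- In the divided powers algebra O_2(2,1) over a field of characteristic 5, the linear maps id - x∂_x (where x∂_x denotes multiplication by x^(1) composed with ∂_x) and ∂_x^5 commute, id - x∂_x is a generalized derivation, and ∂_x^5 is a derivation. -/
open scoped BigOperators

/-- The element `x = x^(1) y^(0)` of `O₂(2,1)`. -/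
def xElt {K : Type*} [Field K] : Fin 25 × Fin 5 → K :=
  fun k => if (k.1 : ℕ) = 1 ∧ (k.2 : ℕ) = 0 then 1 else 0

/-- The generalized derivation `id - x∂_x` of `O₂(2,1)`. -/
def genE {K : Type*} [Field K] (f : Fin 25 × Fin 5 → K) : Fin 25 × Fin 5 → K :=
  f - dpMul2 xElt (dpDx f)

set_option linter.unusedSectionVars false

section
variable {K : Type*} [Field K]

/-- extension of a coefficient function to all of ℕ × ℕ by zero -/
def myExt (f : Fin 25 × Fin 5 → K) : ℕ → ℕ → K :=
  fun a b => if h : a < 25 ∧ b < 5 then f (⟨a, h.1⟩, ⟨b, h.2⟩) else 0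

lemma myExt_apply (f : Fin 25 × Fin 5 → K) (a : Fin 25) (b : Fin 5) :
    myExt f (a : ℕ) (b : ℕ) = f (a, b) := by
  rw [myExt, dif_pos ⟨a.isLt, b.isLt⟩]

lemma myExt_apply' (f : Fin 25 × Fin 5 → K) (i : Fin 25 × Fin 5) :
    myExt f (i.1 : ℕ) (i.2 : ℕ) = f i := by
  rw [myExt_apply]

lemma mySumExt (F : ℕ → ℕ → K) :
    ∑ i : Fin 25 × Fin 5, F (i.1 : ℕ) (i.2 : ℕ)
      = ∑ a ∈ Finset.range 25, ∑ b ∈ Finset.range 5, F a b := by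
  rw [Fintype.sum_prod_type]
  simp only [Fin.sum_univ_eq_sum_range]
  exact Fin.sum_univ_eq_sum_range (fun a => ∑ b ∈ Finset.range 5, F a b) 25

lemma dpMul2_eq (f g : Fin 25 × Fin 5 → K) (k : Fin 25 × Fin 5) :
    dpMul2 f g k = ∑ a ∈ Finset.range 25, ∑ b ∈ Finset.range 5,
      if a ≤ (k.1 : ℕ) ∧ b ≤ (k.2 : ℕ) then
        (((k.1 : ℕ).choose a : K) * ((k.2 : ℕ).choose b : K))
          * myExt f a b * myExt g ((k.1 : ℕ) - a) ((k.2 : ℕ) - b)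
      else 0 := by
  calc dpMul2 f g k = ∑ i : Fin 25 × Fin 5,
      (fun a b : ℕ => if a ≤ (k.1 : ℕ) ∧ b ≤ (k.2 : ℕ) then
        (((k.1 : ℕ).choose a : K) * ((k.2 : ℕ).choose b : K))
          * myExt f a b * myExt g ((k.1 : ℕ) - a) ((k.2 : ℕ) - b)
      else 0) (i.1 : ℕ) (i.2 : ℕ) := ?_
    _ = _ := mySumExt (fun a b : ℕ => if a ≤ (k.1 : ℕ) ∧ b ≤ (k.2 : ℕ) then
        (((k.1 : ℕ).choose a : K) * ((k.2 : ℕ).choose b : K))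
          * myExt f a b * myExt g ((k.1 : ℕ) - a) ((k.2 : ℕ) - b)
      else 0)
  rw [dpMul2]
  refine Finset.sum_congr rfl (fun i _ => ?_)
  show _ = if (i.1 : ℕ) ≤ (k.1 : ℕ) ∧ (i.2 : ℕ) ≤ (k.2 : ℕ) then
        (((k.1 : ℕ).choose i.1 : K) * ((k.2 : ℕ).choose i.2 : K))
          * myExt f (i.1 : ℕ) (i.2 : ℕ) * myExt g ((k.1 : ℕ) - i.1) ((k.2 : ℕ) - i.2)
      else 0
  by_cases h : (i.1 : ℕ) ≤ (k.1 : ℕ) ∧ (i.2 : ℕ) ≤ (k.2 : ℕ)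
  · rw [Finset.sum_eq_single
      ((⟨(k.1 : ℕ) - (i.1 : ℕ), by omega⟩ : Fin 25),
       (⟨(k.2 : ℕ) - (i.2 : ℕ), by omega⟩ : Fin 5))]
    · rw [if_pos h, if_pos
        ⟨show (i.1 : ℕ) + ((k.1 : ℕ) - (i.1 : ℕ)) = (k.1 : ℕ) by omega,
         show (i.2 : ℕ) + ((k.2 : ℕ) - (i.2 : ℕ)) = (k.2 : ℕ) by omega⟩]
      simp only [Fin.val_mk]
      rw [show (i.1 : ℕ) + ((k.1 : ℕ) - (i.1 : ℕ)) = (k.1 : ℕ) by omega,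
        show (i.2 : ℕ) + ((k.2 : ℕ) - (i.2 : ℕ)) = (k.2 : ℕ) by omega]
      simp only [myExt]
      rw [dif_pos (⟨by omega, by omega⟩ :
          ((k.1:ℕ)-(i.1:ℕ) < 25 ∧ (k.2:ℕ)-(i.2:ℕ) < 5)),
        dif_pos (⟨i.1.isLt, i.2.isLt⟩ : ((i.1:ℕ) < 25 ∧ (i.2:ℕ) < 5))]
    · intro j _ hne
      refine if_neg (fun hc => hne ?_)
      obtain ⟨h1, h2⟩ := hc
      refine Prod.ext (Fin.ext ?_) (Fin.ext ?_) <;> simp only [Fin.val_mk] <;> omega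
    · intro hmem; exact absurd (Finset.mem_univ _) hmem
  · rw [if_neg h, Finset.sum_eq_zero]
    intro j _
    exact if_neg (fun hc => h ⟨by omega, by omega⟩)


lemma myExt_zero (f : Fin 25 × Fin 5 → K) {a b : ℕ} (h : 25 ≤ a) : myExt f a b = 0 := by
  simp only [myExt]
  rw [dif_neg (by omega)]

lemma myExt_xElt (a b : ℕ) : myExt (xElt : Fin 25 × Fin 5 → K) a b
    = if a = 1 ∧ b = 0 then 1 else 0 := by
  simp only [myExt, xElt, Fin.val_mk]
  split_ifs <;> first | rfl | omega

lemma myExt_one (a b : ℕ) : myExt (dpOne2 : Fin 25 × Fin 5 → K) a b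
    = if a = 0 ∧ b = 0 then 1 else 0 := by
  simp only [myExt, dpOne2, Fin.val_mk]
  split_ifs <;> first | rfl | omega

lemma dx5_apply (f : Fin 25 × Fin 5 → K) (k : Fin 25 × Fin 5) :
    dpDx^[5] f k = myExt f ((k.1 : ℕ) + 5) (k.2 : ℕ) := by
  show dpDx (dpDx (dpDx (dpDx (dpDx f)))) k = _
  simp only [dpDx, myExt, Fin.val_mk]
  split_ifs <;> first | rfl | omega

lemma genE_apply (f : Fin 25 × Fin 5 → K) (k : Fin 25 × Fin 5) :
    genE f k = f k - ((k.1 : ℕ) : K) * f k := by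
  show f k - dpMul2 xElt (dpDx f) k = _
  rw [dpMul2_eq]
  congr 1
  rcases Nat.eq_zero_or_pos (k.1 : ℕ) with h0 | h1
  · rw [h0, Nat.cast_zero, zero_mul]
    refine Finset.sum_eq_zero fun a _ => Finset.sum_eq_zero fun b _ => ?_
    rw [myExt_xElt]
    split_ifs with hg hx
    · omega
    · ring
    · rfl
  · rw [Finset.sum_eq_single 1]
    · rw [Finset.sum_eq_single 0]
      · rw [myExt_xElt, if_pos ⟨h1, Nat.zero_le _⟩, if_pos ⟨rfl, rfl⟩]
        have hext : myExt (dpDx f) ((k.1 : ℕ) - 1) ((k.2 : ℕ) - 0) = f k := by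
          simp only [myExt, dpDx]
          rw [dif_pos ⟨by omega, by omega⟩]
          rw [dif_pos (by omega : (k.1 : ℕ) - 1 + 1 < 25)]
          exact congrArg f (Prod.ext (Fin.ext (by simp only [Fin.val_mk]; omega))
            (Fin.ext (by simp only [Fin.val_mk]; omega)))
        rw [hext, Nat.choose_one_right, Nat.choose_zero_right]
        push_cast
        ring
      · intro b _ hb
        rw [myExt_xElt]
        split_ifs with hg hx
        · omega
        · ring
        · rfl
      · intro hmem; exact absurd (by simp : (0:ℕ) ∈ Finset.range 5) hmem
    · intro a _ ha
      refine Finset.sum_eq_zero fun b _ => ?_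
      rw [myExt_xElt]
      split_ifs with hg hx
      · omega
      · ring
      · rfl
    · intro hmem; exact absurd (by simp : (1:ℕ) ∈ Finset.range 25) hmem

lemma one_right (f : Fin 25 × Fin 5 → K) (k : Fin 25 × Fin 5) :
    dpMul2 f dpOne2 k = f k := by
  rw [dpMul2_eq]
  rw [Finset.sum_eq_single (k.1 : ℕ)]
  · rw [Finset.sum_eq_single (k.2 : ℕ)]
    · rw [myExt_one, if_pos ⟨le_refl _, le_refl _⟩, if_pos ⟨by omega, by omega⟩,
        Nat.choose_self, Nat.choose_self, myExt_apply' f k]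
      push_cast
      ring
    · intro b _ hb
      rw [myExt_one]
      split_ifs with hg hx
      · omega
      · ring
      · rfl
    · intro hmem; exact absurd (by simp [Fin.isLt] : (k.2:ℕ) ∈ Finset.range 5) hmem
  · intro a _ ha
    refine Finset.sum_eq_zero fun b _ => ?_
    rw [myExt_one]
    split_ifs with hg hx
    · omega
    · ring
    · rfl
  · intro hmem; exact absurd (by simp [Fin.isLt] : (k.1:ℕ) ∈ Finset.range 25) hmem

lemma ext_genE (f : Fin 25 × Fin 5 → K) (a b : ℕ) :
    myExt (genE f) a b = myExt f a b - (a : K) * myExt f a b := by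
  simp only [myExt]
  split_ifs with h
  · rw [genE_apply]
  · ring

lemma genE_one : genE (dpOne2 : Fin 25 × Fin 5 → K) = dpOne2 := by
  funext k
  rw [genE_apply]
  rcases Nat.eq_zero_or_pos (k.1 : ℕ) with h0 | h1
  · rw [h0]
    simp
  · have hz : dpOne2 (K := K) k = 0 := by
      simp only [dpOne2]
      rw [if_neg (by omega)]
    rw [hz]
    ring

lemma ext_dx5 (f : Fin 25 × Fin 5 → K) {a b : ℕ} (ha : a < 25) (hb : b < 5) :
    myExt (dpDx^[5] f) a b = myExt f (a + 5) b := by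
  conv_lhs => rw [myExt]
  rw [dif_pos ⟨ha, hb⟩, dx5_apply]


end

section
variable {K : Type*} [Field K] [CharP K 5]

lemma myCast5 {a b : ℕ} (h : a ≡ b [MOD 5]) : (a : K) = (b : K) := by
  have h5 : ((5:ℕ) : K) = 0 := CharP.cast_eq_zero K 5
  have hm : a % 5 = b % 5 := h
  calc (a : K) = ((5 * (a/5) + a % 5 : ℕ) : K) := by rw [Nat.div_add_mod]
    _ = ((5:ℕ):K) * ((a/5 : ℕ) : K) + ((a % 5 : ℕ) : K) := by push_cast; ring
    _ = ((5:ℕ):K) * ((b/5 : ℕ) : K) + ((b % 5 : ℕ) : K) := by rw [h5, hm]; ring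
    _ = ((5 * (b/5) + b % 5 : ℕ) : K) := by push_cast; ring
    _ = (b : K) := by rw [Nat.div_add_mod]

lemma myLucas5 (n k : ℕ) :
    n.choose k ≡ (n % 5).choose (k % 5) * ((n / 5).choose (k / 5)) [MOD 5] := by
  haveI : Fact (Nat.Prime 5) := ⟨by norm_num⟩
  exact Choose.choose_modEq_choose_mod_mul_choose_div_nat

lemma myL1 {m a : ℕ} (hm : 20 ≤ m) (hm' : m ≤ 24) (ha : a < 5) (h2 : m ≤ a + 19) :
    ((m.choose a : ℕ) : K) = 0 := by
  rw [myCast5 (myLucas5 m a)]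
  rw [show m % 5 = m - 20 by omega, show a % 5 = a by omega,
    Nat.choose_eq_zero_of_lt (by omega)]
  simp

lemma myL2 {m a : ℕ} (hm : 20 ≤ m) (hm' : m ≤ 24) (ha : 5 ≤ a) (ha' : a ≤ m) :
    ((m.choose (a-5) : ℕ) : K) + ((m.choose a : ℕ) : K) = 0 := by
  rw [myCast5 (myLucas5 m (a-5)), myCast5 (myLucas5 m a)]
  obtain ⟨s', hs'⟩ : ∃ s', a / 5 = s' + 1 := ⟨a/5 - 1, by omega⟩
  have h1 : (a-5) % 5 = a % 5 := by omega
  have h2 : (a-5) / 5 = s' := by omega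
  have h3 : m / 5 = 4 := by omega
  rw [h1, h2, h3, hs']
  rw [← Nat.cast_add, ← Nat.mul_add, ← Nat.choose_succ_succ 4 s']
  have hdvd : 5 ∣ Nat.choose 5 (s' + 1) :=
    (Nat.prime_five).dvd_choose_self (by omega) (by omega)
  rw [Nat.cast_mul, (CharP.cast_eq_zero_iff K 5 _).2 hdvd, mul_zero]

lemma myL3 {m a : ℕ} (hm : 20 ≤ m) (hm' : m ≤ 24) (ha : 5 ≤ a) (ha' : a < 25) (hma : m < a) :
    ((m.choose (a-5) : ℕ) : K) = 0 := by
  rw [myCast5 (myLucas5 m (a-5))]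
  rw [show m % 5 = m - 20 by omega, show (a-5) % 5 = a - 20 by omega,
    Nat.choose_eq_zero_of_lt (by omega)]
  simp

lemma myA5 (m a : ℕ) :
    (((m+5).choose a : ℕ) : K)
      = (if 5 ≤ a then ((m.choose (a-5) : ℕ) : K) else 0) + ((m.choose a : ℕ) : K) := by
  rw [myCast5 (myLucas5 (m+5) a), myCast5 (myLucas5 m a)]
  have e1 : (m+5) % 5 = m % 5 := by omega
  have e2 : (m+5) / 5 = m / 5 + 1 := by omega
  by_cases h5a : 5 ≤ a
  · rw [if_pos h5a, myCast5 (myLucas5 m (a-5))]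
    obtain ⟨s', hs'⟩ : ∃ s', a / 5 = s' + 1 := ⟨a/5 - 1, by omega⟩
    rw [e1, e2, hs', show (a-5) % 5 = a % 5 by omega, show (a-5)/5 = s' by omega,
      Nat.choose_succ_succ' (m/5) s']
    push_cast
    ring
  · rw [if_neg h5a, e1, e2, show a % 5 = a by omega, show a / 5 = 0 by omega]
    simp


lemma my_c1 (f : Fin 25 × Fin 5 → K) : genE (dpDx^[5] f) = dpDx^[5] (genE f) := by
  funext k
  rw [genE_apply, dx5_apply, dx5_apply]
  have h5 : (5 : K) = 0 := by exact_mod_cast CharP.cast_eq_zero K 5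
  simp only [myExt]
  split_ifs with h
  · rw [genE_apply]
    simp only [Fin.val_mk]
    push_cast
    rw [h5]
    ring
  · ring

lemma my_c2 (f g : Fin 25 × Fin 5 → K) :
    genE (dpMul2 f g)
      = dpMul2 (genE f) g + dpMul2 f (genE g) - dpMul2 (dpMul2 f g) (genE dpOne2) := by
  funext k
  rw [Pi.sub_apply, Pi.add_apply, genE_one, one_right, genE_apply]
  have key : dpMul2 (genE f) g k + dpMul2 f (genE g) k
      = (2 - ((k.1 : ℕ) : K)) * dpMul2 f g k := by
    rw [dpMul2_eq, dpMul2_eq, dpMul2_eq, Finset.mul_sum, ← Finset.sum_add_distrib]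
    refine Finset.sum_congr rfl fun a ha => ?_
    rw [Finset.mul_sum, ← Finset.sum_add_distrib]
    refine Finset.sum_congr rfl fun b hb => ?_
    rw [ext_genE, ext_genE]
    split_ifs with hg
    · rw [Nat.cast_sub hg.1]
      ring
    · ring
  rw [key]
  ring


lemma my_c3 (f g : Fin 25 × Fin 5 → K) :
    dpDx^[5] (dpMul2 f g) = dpMul2 (dpDx^[5] f) g + dpMul2 f (dpDx^[5] g) := by
  funext k
  obtain ⟨⟨m, hm⟩, ⟨n, hn⟩⟩ := k
  rw [Pi.add_apply, dx5_apply, dpMul2_eq, dpMul2_eq]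
  simp only [Fin.val_mk]
  have e1 : (∑ a ∈ Finset.range 25, ∑ b ∈ Finset.range 5, (if a ≤ m ∧ b ≤ n then (m.choose a : K) * (n.choose b : K) * myExt (dpDx^[5] f) a b * myExt g (m - a) (n - b) else 0))
      = ∑ a ∈ Finset.range 30, ∑ b ∈ Finset.range 5, (if 5 ≤ a ∧ a ≤ m + 5 ∧ b ≤ n then (m.choose (a - 5) : K) * (n.choose b : K) * myExt f a b * myExt g (m + 5 - a) (n - b) else 0) := by
    have step1 : (∑ a ∈ Finset.Ico 5 30, ∑ b ∈ Finset.range 5, (if 5 ≤ a ∧ a ≤ m + 5 ∧ b ≤ n then (m.choose (a - 5) : K) * (n.choose b : K) * myExt f a b * myExt g (m + 5 - a) (n - b) else 0))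
        = ∑ a ∈ Finset.range 30, ∑ b ∈ Finset.range 5, (if 5 ≤ a ∧ a ≤ m + 5 ∧ b ≤ n then (m.choose (a - 5) : K) * (n.choose b : K) * myExt f a b * myExt g (m + 5 - a) (n - b) else 0) := by
      refine Finset.sum_subset (fun x hx => Finset.mem_range.mpr (by
          have := Finset.mem_Ico.mp hx; omega)) (fun x hx hnx => Finset.sum_eq_zero fun b hb =>
        if_neg (fun hc => hnx (Finset.mem_Ico.mpr ⟨hc.1, Finset.mem_range.mp hx⟩)))
    rw [← step1, Finset.sum_Ico_eq_sum_range]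
    rw [show (30 : ℕ) - 5 = 25 from rfl]
    refine Finset.sum_congr rfl fun a ha => Finset.sum_congr rfl fun b hb => ?_
    rw [ext_dx5 f (Finset.mem_range.mp ha) (Finset.mem_range.mp hb)]
    split_ifs with h1 h2 h2
    · rw [show 5 + a - 5 = a by omega, show m + 5 - (5 + a) = m - a by omega,
        show 5 + a = a + 5 by omega]
    · omega
    · omega
    · rfl
  have e2 : (∑ a ∈ Finset.range 25, ∑ b ∈ Finset.range 5, (if a ≤ m ∧ b ≤ n then (m.choose a : K) * (n.choose b : K) * myExt f a b * myExt (dpDx^[5] g) (m - a) (n - b) else 0))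
      = ∑ a ∈ Finset.range 30, ∑ b ∈ Finset.range 5, (if a ≤ m ∧ b ≤ n then (m.choose a : K) * (n.choose b : K) * myExt f a b * myExt g (m + 5 - a) (n - b) else 0) := by
    calc (∑ a ∈ Finset.range 25, ∑ b ∈ Finset.range 5, (if a ≤ m ∧ b ≤ n then (m.choose a : K) * (n.choose b : K) * myExt f a b * myExt (dpDx^[5] g) (m - a) (n - b) else 0))
        = ∑ a ∈ Finset.range 25, ∑ b ∈ Finset.range 5, (if a ≤ m ∧ b ≤ n then (m.choose a : K) * (n.choose b : K) * myExt f a b * myExt g (m + 5 - a) (n - b) else 0) := by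
          refine Finset.sum_congr rfl fun a ha => Finset.sum_congr rfl fun b hb => ?_
          rw [ext_dx5 g (by omega : m - a < 25) (by omega : n - b < 5)]
          split_ifs with h1
          · rw [show m - a + 5 = m + 5 - a by omega]
          · rfl
      _ = _ := Finset.sum_subset (Finset.range_subset_range.mpr (by omega))
          (fun x hx hnx => Finset.sum_eq_zero fun b hb => if_neg
            (fun hc => hnx (Finset.mem_range.mpr (by omega))))
  rw [e1, e2, ← Finset.sum_add_distrib]
  by_cases h25 : m + 5 < 25
  · have hL : myExt (dpMul2 f g) (m + 5) n
        = ∑ a ∈ Finset.range 30, ∑ b ∈ Finset.range 5, (if a ≤ m + 5 ∧ b ≤ n then ((m + 5).choose a : K) * (n.choose b : K) * myExt f a b * myExt g (m + 5 - a) (n - b) else 0) := by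
      conv_lhs => rw [myExt]
      rw [dif_pos ⟨h25, hn⟩, dpMul2_eq]
      simp only [Fin.val_mk]
      exact Finset.sum_subset (Finset.range_subset_range.mpr (by omega))
        (fun x hx hnx => Finset.sum_eq_zero fun b hb => if_neg
          (fun hc => hnx (Finset.mem_range.mpr (by omega))))
    rw [hL]
    refine Finset.sum_congr rfl fun a ha => ?_
    rw [← Finset.sum_add_distrib]
    refine Finset.sum_congr rfl fun b hb => ?_
    rw [myA5 m a]
    split_ifs <;> first
      | omega
      | ring1
      | (rw [Nat.choose_eq_zero_of_lt (show m < a by omega)]; push_cast; ring1)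
  · have hL : myExt (dpMul2 f g) (m + 5) n = 0 := by
      simp only [myExt]
      rw [dif_neg (by omega)]
    rw [hL]
    symm
    refine Finset.sum_eq_zero fun a ha => ?_
    rw [← Finset.sum_add_distrib]
    refine Finset.sum_eq_zero fun b hb => ?_
    have ha30 := Finset.mem_range.mp ha
    have hb5 := Finset.mem_range.mp hb
    split_ifs with h1 h2 h2
    · have h0 := myL2 (K := K) (show 20 ≤ m by omega) (show m ≤ 24 by omega) h1.1 h2.1
      linear_combination ((n.choose b : K) * myExt f a b * myExt g (m + 5 - a) (n - b)) * h0
    · by_cases ha25 : a < 25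
      · rw [myL3 (K := K) (show 20 ≤ m by omega) (show m ≤ 24 by omega) h1.1 ha25 (by omega)]
        ring
      · rw [myExt_zero f (by omega)]
        ring
    · by_cases hg19 : m ≤ a + 19
      · rw [myL1 (K := K) (show 20 ≤ m by omega) (show m ≤ 24 by omega) (by omega) hg19]
        ring
      · rw [myExt_zero g (by omega : 25 ≤ m + 5 - a)]
        ring
    · ring

end


/-- In `O₂(2,1)` over a field of characteristic 5: the maps `id - x∂_x` and `∂_x⁵`
commute, `id - x∂_x` is a generalized derivation, and `∂_x⁵` is a derivation. -/
theorem genE_dpDx5 {K : Type*} [Field K] [CharP K 5] :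
    (∀ f : Fin 25 × Fin 5 → K, genE (dpDx^[5] f) = dpDx^[5] (genE f)) ∧
    (∀ f g : Fin 25 × Fin 5 → K,
      genE (dpMul2 f g)
        = dpMul2 (genE f) g + dpMul2 f (genE g) - dpMul2 (dpMul2 f g) (genE dpOne2)) ∧
    (∀ f g : Fin 25 × Fin 5 → K,
      dpDx^[5] (dpMul2 f g) = dpMul2 (dpDx^[5] f) g + dpMul2 f (dpDx^[5] g)) :=
  ⟨my_c1, my_c2, my_c3⟩
end
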